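/- For each w ∈ ℝ³, the fibre {(u, v) ∈ ℝ³ × ℝ³ : u × v = w} of the map (u, v) ↦ u × v is path-connected. -/

import Mathlib

open Matrix

private lemma cross_triple_aux (u w : Fin 3 → ℝ) :
    u ⨯₃ (w ⨯₃ u) = (u ⬝ᵥ u) • w - (u ⬝ᵥ w) • u := by
  funext i
  fin_cases i <;>
    simp [cross_apply, dotProduct, Fin.sum_univ_three] <;> ring

private lemma cross_key (w z : Fin 3 → ℝ) (hz : z ≠ 0) (hzw : z ⬝ᵥ w = 0) :
    z ⨯₃ ((z ⬝ᵥ z)⁻¹ • (w ⨯₃ z)) = w := by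
  have hzz : z ⬝ᵥ z ≠ 0 := fun h => hz (dotProduct_self_eq_zero.mp h)
  rw [_root_.map_smul, cross_triple_aux, hzw, zero_smul, sub_zero, smul_smul,
    inv_mul_cancel₀ hzz, one_smul]

/-- Each fibre of the cross product map `(u, v) ↦ u × v` on `ℝ³ × ℝ³` is path-connected. -/
theorem crossProduct_fibre_isPathConnected (w : Fin 3 → ℝ) :
    IsPathConnected {x : (Fin 3 → ℝ) × (Fin 3 → ℝ) | x.1 ⨯₃ x.2 = w} := by
  set s : Set ((Fin 3 → ℝ) × (Fin 3 → ℝ)) := {x | x.1 ⨯₃ x.2 = w} with hs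
  rcases eq_or_ne w 0 with rfl | hw
  · -- fibre of 0 is star-shaped about (0, 0)
    refine ⟨(0, 0), by simp [hs], ?_⟩
    rintro ⟨u, v⟩ huv
    simp only [hs, Set.mem_setOf_eq] at huv
    refine JoinedIn.ofLine (f := fun t => (t • u, t • v)) (by fun_prop)
      (by simp) (by simp) ?_
    rintro _ ⟨t, -, rfl⟩
    show (t • u) ⨯₃ (t • v) = 0
    rw [_root_.map_smul, LinearMap.map_smul₂, huv, smul_zero, smul_zero]
  · -- nonzero fibre
    -- the linear functional z ↦ z ⬝ᵥ w
    let φ : (Fin 3 → ℝ) →ₗ[ℝ] ℝ :=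
      { toFun := fun z => z ⬝ᵥ w
        map_add' := fun a b => add_dotProduct a b w
        map_smul' := fun c a => smul_dotProduct c a w }
    set K := LinearMap.ker φ with hK
    have hφw : φ w = w ⬝ᵥ w := rfl
    have hφ : φ ≠ 0 := by
      intro h
      apply hw
      have : φ w = 0 := by rw [h]; rfl
      rw [hφw] at this
      exact dotProduct_self_eq_zero.mp this
    have hrange : Module.finrank ℝ (LinearMap.range φ) ≤ 1 :=
      (Submodule.finrank_le _).trans_eq (Module.finrank_self ℝ)
    have hsum : Module.finrank ℝ (LinearMap.range φ) + Module.finrank ℝ K = 3 := by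
      rw [hK, LinearMap.finrank_range_add_finrank_ker φ, Module.finrank_fin_fun]
    have hK2 : 2 ≤ Module.finrank ℝ K := by omega
    have hKrank : 1 < Module.rank ℝ K := by
      rw [← Module.finrank_eq_rank]
      exact_mod_cast lt_of_lt_of_le (by norm_num) hK2
    -- the parametrization of "orthogonal" points of the fibre
    set G : K → (Fin 3 → ℝ) × (Fin 3 → ℝ) :=
      fun z => ((z : Fin 3 → ℝ), ((z : Fin 3 → ℝ) ⬝ᵥ (z : Fin 3 → ℝ))⁻¹ • (w ⨯₃ (z : Fin 3 → ℝ)))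
      with hG
    have hGmem : ∀ z : K, z ≠ 0 → G z ∈ s := by
      intro z hz
      have hz' : (z : Fin 3 → ℝ) ≠ 0 := fun h => hz (Subtype.ext h)
      exact cross_key w z hz' z.2
    have hGcont : ContinuousOn G {(0 : K)}ᶜ := by
      have c1 : Continuous fun z : K => (z : Fin 3 → ℝ) := continuous_subtype_val
      have c2 : Continuous fun z : K => (z : Fin 3 → ℝ) ⬝ᵥ (z : Fin 3 → ℝ) := by
        have : Continuous fun y : Fin 3 → ℝ => y ⬝ᵥ y := by
          unfold dotProduct; fun_prop
        exact this.comp c1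
      have c3 : Continuous fun z : K => w ⨯₃ (z : Fin 3 → ℝ) :=
        ((crossProduct w).continuous_of_finiteDimensional).comp c1
      refine c1.continuousOn.prodMk (ContinuousOn.fun_smul ?_ c3.continuousOn)
      refine (c2.continuousOn.inv₀ ?_)
      intro z hz
      have hz' : (z : Fin 3 → ℝ) ≠ 0 := fun h => hz (Subtype.ext h)
      exact fun h => hz' (dotProduct_self_eq_zero.mp h)
    have hGim : IsPathConnected (G '' {(0 : K)}ᶜ) :=
      (isPathConnected_compl_singleton_of_one_lt_rank hKrank 0).image' hGcont
    have hGsub : G '' {(0 : K)}ᶜ ⊆ s := by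
      rintro _ ⟨z, hz, rfl⟩
      exact hGmem z hz
    -- second-coordinate segment from a fibre point to its orthogonalized form
    have segment : ∀ u v : Fin 3 → ℝ, u ⨯₃ v = w →
        JoinedIn s (u, v) (u, (u ⬝ᵥ u)⁻¹ • (w ⨯₃ u)) := by
      intro u v huv
      set v₀ := (u ⬝ᵥ u)⁻¹ • (w ⨯₃ u) with hv₀
      have hu : u ≠ 0 := by
        rintro rfl
        apply hw
        rw [← huv, map_zero, LinearMap.zero_apply]
      have huw : u ⬝ᵥ w = 0 := by rw [← huv]; exact dot_self_cross u v
      have hcross₀ : u ⨯₃ v₀ = w := cross_key w u hu huw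
      refine JoinedIn.ofLine (f := fun t => (u, v + t • (v₀ - v))) (by fun_prop)
        (by simp) (by simp) ?_
      rintro _ ⟨t, -, rfl⟩
      show u ⨯₃ (v + t • (v₀ - v)) = w
      rw [map_add, _root_.map_smul, map_sub, hcross₀, huv, sub_self, smul_zero, add_zero]
    rw [isPathConnected_iff]
    constructor
    · -- nonempty: take any nonzero element of K
      have hKbot : K ≠ ⊥ := by
        intro h
        rw [h] at hK2
        simp [finrank_bot] at hK2
      obtain ⟨z, hzK, hz⟩ := Submodule.exists_mem_ne_zero_of_ne_bot hKbot
      exact ⟨G ⟨z, hzK⟩, hGmem ⟨z, hzK⟩ (by simpa using hz)⟩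
    · rintro ⟨u, v⟩ huv ⟨u', v'⟩ huv'
      simp only [hs, Set.mem_setOf_eq] at huv huv'
      have hu : u ≠ 0 := by
        rintro rfl; apply hw; rw [← huv, map_zero, LinearMap.zero_apply]
      have hu' : u' ≠ 0 := by
        rintro rfl; apply hw; rw [← huv', map_zero, LinearMap.zero_apply]
      have huw : u ⬝ᵥ w = 0 := by rw [← huv]; exact dot_self_cross u v
      have huw' : u' ⬝ᵥ w = 0 := by rw [← huv']; exact dot_self_cross u' v'
      have huK : u ∈ K := huw
      have huK' : u' ∈ K := huw'
      have hmem1 : G ⟨u, huK⟩ ∈ G '' {(0 : K)}ᶜ :=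
        Set.mem_image_of_mem _ (by simpa [Subtype.ext_iff] using hu)
      have hmem2 : G ⟨u', huK'⟩ ∈ G '' {(0 : K)}ᶜ :=
        Set.mem_image_of_mem _ (by simpa [Subtype.ext_iff] using hu')
      have mid : JoinedIn s (G ⟨u, huK⟩) (G ⟨u', huK'⟩) :=
        (hGim.joinedIn _ hmem1 _ hmem2).mono hGsub
      exact ((segment u v huv).trans mid).trans (segment u' v' huv').symm
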